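/- (Dual relative smoothness for exponential penalty) Let f_τ(x) = cᵀx + τ Σᵢ exp((A_i x − b_i)/τ) where A ∈ ℝ^{n×d} has unit-norm rows and full rank d, and the polytope P = {x : Ax ≤ b} is contained in a ball of radius R and contains a ball of radius r > 0. Let k(x*) = ‖x*‖ − log(‖x*‖+1). Then ∇²f_τ(x) ⪯ L*_τ · [∇²k(∇f_τ(x))]⁻¹ for all x ∈ ℝ^d, where L*_τ = (2R/r)·(‖AᵀA‖/τ)·(η + ‖c‖) with η = sup_{‖s‖_∞ ≤ 1} ‖Aᵀs‖. -/

import Mathlib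

open Filter Topology RealInnerProductSpace Classical

noncomputable section

abbrev E (d : ℕ) := EuclideanSpace ℝ (Fin d)

lemma hasFDerivAt_norm' {d : ℕ} (y : E d) (hy : y ≠ 0) :
    HasFDerivAt (fun w : E d => ‖w‖) (‖y‖⁻¹ • innerSL ℝ y) y := by
  have h1 : HasFDerivAt (fun w : E d => ‖w‖ ^ 2) (2 • (innerSL ℝ y)) y := by
    simpa using (hasFDerivAt_id y).norm_sq
  have hy' : ‖y‖ ≠ 0 := norm_ne_zero_iff.mpr hy
  have hpos : (‖y‖:ℝ) ^ 2 ≠ 0 := pow_ne_zero _ hy'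
  have h2 := (Real.hasDerivAt_sqrt hpos).comp_hasFDerivAt y h1
  have he : ((fun x => Real.sqrt x) ∘ fun w : E d => ‖w‖ ^ 2) = fun w : E d => ‖w‖ := by
    funext w; simp [Function.comp, Real.sqrt_sq (norm_nonneg w)]
  rw [he] at h2
  refine h2.congr_fderiv ?_
  symm
  rw [Real.sqrt_sq (norm_nonneg y)]
  ext u
  simp [smul_smul]
  field_simp

lemma hasFDerivAt_zero' {d : ℕ} :
    HasFDerivAt (fun w : E d => (‖w‖ + 1)⁻¹ • w) (ContinuousLinearMap.id ℝ (E d)) 0 := by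
  rw [hasFDerivAt_iff_isLittleO_nhds_zero]
  rw [Asymptotics.isLittleO_iff]
  intro c hc
  filter_upwards [Metric.closedBall_mem_nhds (0 : E d) hc] with h hh
  have hhc : ‖h‖ ≤ c := by simpa [dist_zero_right] using Metric.mem_closedBall.mp hh
  have h1 : (0:ℝ) < ‖h‖ + 1 := by positivity
  simp only [zero_add, ContinuousLinearMap.id_apply]
  have e : (‖h‖ + 1)⁻¹ • h - (‖(0:E d)‖ + 1)⁻¹ • (0:E d) - h = ((‖h‖ + 1)⁻¹ - 1) • h := by
    rw [smul_zero, sub_zero, sub_smul, one_smul]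
  rw [e, norm_smul]
  have e2 : ‖(‖h‖ + 1)⁻¹ - 1‖ ≤ ‖h‖ := by
    rw [Real.norm_eq_abs, abs_sub_comm, abs_of_nonneg]
    · rw [sub_le_iff_le_add]
      have : (‖h‖ + 1)⁻¹ ≥ 0 := by positivity
      have hinv : (‖h‖ + 1) * (‖h‖ + 1)⁻¹ = 1 := mul_inv_cancel₀ h1.ne'
      nlinarith [norm_nonneg h, sq_nonneg ‖h‖]
    · rw [sub_nonneg]
      rw [inv_le_one_iff₀]; right; linarith [norm_nonneg h]
  calc ‖(‖h‖ + 1)⁻¹ - 1‖ * ‖h‖ ≤ ‖h‖ * ‖h‖ := by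
        exact mul_le_mul_of_nonneg_right e2 (norm_nonneg h)
    _ ≤ c * ‖h‖ := mul_le_mul_of_nonneg_right hhc (norm_nonneg h)

lemma kpp_apply {d : ℕ} (y : E d) (hy : y ≠ 0) (k : E d →L[ℝ] E d)
    (hk : HasFDerivAt (fun w : E d => (‖w‖ + 1)⁻¹ • w) k y) (u : E d) :
    k u = (‖y‖ + 1)⁻¹ • u - (‖y‖⁻¹ * ((‖y‖ + 1) ^ 2)⁻¹ * ⟪y, u⟫) • y := by
  have hs : (‖y‖ + 1) ≠ 0 := by positivity
  have h1 : HasFDerivAt (fun w : E d => ‖w‖ + 1) (‖y‖⁻¹ • innerSL ℝ y) y :=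
    (hasFDerivAt_norm' y hy).add_const 1
  have h2 := (hasDerivAt_inv hs).comp_hasFDerivAt y h1
  have h3 := h2.smul (hasFDerivAt_id y)
  have hk2 := hk.unique h3
  rw [hk2]
  simp [ContinuousLinearMap.smul_apply, ContinuousLinearMap.smulRight_apply, smul_smul]
  ring_nf
  module

lemma claim3 {d : ℕ} (k'' kinv : E d → (E d →L[ℝ] E d))
    (hk'' : ∀ y : E d, HasFDerivAt (fun w : E d => (‖w‖ + 1)⁻¹ • w) (k'' y) y)
    (hkinv : ∀ y : E d,
      (k'' y).comp (kinv y) = ContinuousLinearMap.id ℝ (E d) ∧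
      (kinv y).comp (k'' y) = ContinuousLinearMap.id ℝ (E d))
    (y v : E d) : (1 + ‖y‖) * ‖v‖ ^ 2 ≤ ⟪v, kinv y v⟫ := by
  set u : E d := kinv y v with hu
  have hvu : k'' y u = v := by
    have := DFunLike.congr_fun (hkinv y).1 v
    simpa using this
  have hgoal : ⟪v, kinv y v⟫ = ⟪v, u⟫ := rfl
  rw [hgoal]
  by_cases hy : y = 0
  · subst hy
    have hid : k'' 0 = ContinuousLinearMap.id ℝ (E d) := (hk'' 0).unique hasFDerivAt_zero'
    rw [hid] at hvu
    simp only [ContinuousLinearMap.id_apply] at hvu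
    rw [hvu, real_inner_self_eq_norm_sq]
    simp
  · have hveq : v = (‖y‖ + 1)⁻¹ • u - (‖y‖⁻¹ * ((‖y‖ + 1) ^ 2)⁻¹ * ⟪y, u⟫) • y := by
      rw [← hvu]; exact kpp_apply y hy (k'' y) (hk'' y) u
    have hY : (0:ℝ) < ‖y‖ := norm_pos_iff.mpr hy
    set Y := ‖y‖ with hYdef
    set s : ℝ := Y + 1 with hsdef
    have hs : (0:ℝ) < s := by positivity
    set Q : ℝ := ⟪y, u⟫ with hQ
    set N : ℝ := ⟪u, u⟫ with hN
    have hyy : ⟪y, y⟫ = Y ^ 2 := real_inner_self_eq_norm_sq y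
    have huy : ⟪u, y⟫ = Q := by rw [real_inner_comm]
    have hvu2 : ⟪v, u⟫ = s⁻¹ * N - (Y⁻¹ * (s ^ 2)⁻¹ * Q) * Q := by
      rw [hveq]
      rw [inner_sub_left, real_inner_smul_left, real_inner_smul_left]
    have hyv : ⟪y, v⟫ = s⁻¹ * Q - (Y⁻¹ * (s ^ 2)⁻¹ * Q) * Y ^ 2 := by
      nth_rewrite 1 [hveq]
      rw [inner_sub_right, real_inner_smul_right, real_inner_smul_right, hyy, ← hQ]
    have huv : ⟪u, v⟫ = s⁻¹ * N - (Y⁻¹ * (s ^ 2)⁻¹ * Q) * Q := by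
      rw [real_inner_comm]; exact hvu2
    have hvv : ⟪v, v⟫ = s⁻¹ * (s⁻¹ * N - (Y⁻¹ * (s ^ 2)⁻¹ * Q) * Q)
        - (Y⁻¹ * (s ^ 2)⁻¹ * Q) * (s⁻¹ * Q - (Y⁻¹ * (s ^ 2)⁻¹ * Q) * Y ^ 2) := by
      nth_rewrite 1 [hveq]
      rw [inner_sub_left, real_inner_smul_left, real_inner_smul_left, huv, hyv]
    have hnv : ‖v‖ ^ 2 = ⟪v, v⟫ := (real_inner_self_eq_norm_sq v).symm
    rw [hnv]
    have key : ⟪v, u⟫ - s * ⟪v, v⟫ = Q ^ 2 * (Y⁻¹ * (s ^ 3)⁻¹) := by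
      rw [hvu2, hvv]
      field_simp
      ring
    have hpos : (0:ℝ) ≤ Q ^ 2 * (Y⁻¹ * (s ^ 3)⁻¹) := by positivity
    have : (1 + Y) = s := by rw [hsdef]; ring
    rw [this]
    nlinarith [key, hpos]

set_option maxHeartbeats 1000000 in
lemma wbound {n d : ℕ} (τ : ℝ) (hτ : 0 < τ)
    (A : Fin n → E d) (hA : ∀ i, ‖A i‖ = 1)
    (b : Fin n → ℝ) (c : E d)
    (R r : ℝ) (hr : 0 < r)
    (xR xr : E d)
    (hPR : {x : E d | ∀ i, ⟪A i, x⟫ ≤ b i} ⊆ Metric.closedBall xR R)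
    (hPr : Metric.closedBall xr r ⊆ {x : E d | ∀ i, ⟪A i, x⟫ ≤ b i})
    (η : ℝ)
    (hη : η = sSup {v : ℝ | ∃ s : Fin n → ℝ, (∀ i, |s i| ≤ 1) ∧ v = ‖∑ i, s i • A i‖})
    (x : E d) :
    ∀ i : Fin n, Real.exp ((⟪A i, x⟫ - b i) / τ) ≤
      (2 * R / r) * (η + ‖c‖) *
        (1 + ‖c + ∑ i, Real.exp ((⟪A i, x⟫ - b i) / τ) • A i‖) := by
  set t : Fin n → ℝ := fun i => ⟪A i, x⟫ - b i with ht
  set w : Fin n → ℝ := fun i => Real.exp (t i / τ) with hw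
  set y : E d := c + ∑ i, w i • A i with hy
  set g : E d := ∑ i, w i • A i with hg
  -- basic facts
  have hSbdd : BddAbove {v : ℝ | ∃ s : Fin n → ℝ, (∀ i, |s i| ≤ 1) ∧ v = ‖∑ i, s i • A i‖} := by
    refine ⟨n, ?_⟩
    rintro v ⟨s, hs, rfl⟩
    calc ‖∑ i, s i • A i‖ ≤ ∑ i, ‖s i • A i‖ := norm_sum_le _ _
      _ ≤ ∑ _i : Fin n, (1:ℝ) := by
          refine Finset.sum_le_sum fun i _ => ?_
          rw [norm_smul, hA i, mul_one, Real.norm_eq_abs]; exact hs i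
      _ = n := by simp
  have hd : ∀ i, r ≤ b i - ⟪A i, xr⟫ := by
    intro i
    have hmem : xr + r • A i ∈ Metric.closedBall xr r := by
      rw [Metric.mem_closedBall, dist_eq_norm]
      simp [norm_smul, hA i, abs_of_pos hr]
    have := hPr hmem i
    rw [inner_add_right, real_inner_smul_right, real_inner_self_eq_norm_sq, hA i] at this
    nlinarith
  have hxrP : xr ∈ {x : E d | ∀ i, ⟪A i, x⟫ ≤ b i} :=
    hPr (Metric.mem_closedBall_self hr.le)
  have hxrR : ‖xr - xR‖ ≤ R := by
    have := hPR hxrP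
    rwa [Metric.mem_closedBall, dist_eq_norm] at this
  have hR0 : (0:ℝ) ≤ R := le_trans (norm_nonneg _) hxrR
  intro i
  -- eta ≥ 1
  have hη1 : (1:ℝ) ≤ η := by
    rw [hη]
    have hmem : (1:ℝ) ∈ {v : ℝ | ∃ s : Fin n → ℝ, (∀ i, |s i| ≤ 1) ∧ v = ‖∑ i, s i • A i‖} := by
      refine ⟨fun j => if j = i then 1 else 0, fun j => by dsimp only; split <;> simp, ?_⟩
      have e : ∀ j, (if j = i then (1:ℝ) else 0) • A j = if j = i then A j else 0 := by
        intro j; split <;> simp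
      simp only [e, Finset.sum_ite_eq' Finset.univ i A, Finset.mem_univ, if_true, hA i]
    exact le_csSup hSbdd hmem
  have hr2R : r ≤ 2 * R := by
    have hmem : xr + r • A i ∈ Metric.closedBall xr r := by
      rw [Metric.mem_closedBall, dist_eq_norm]
      simp [norm_smul, hA i, abs_of_pos hr]
    have h1 : ‖(xr + r • A i) - xR‖ ≤ R := by
      have := hPR (hPr hmem)
      rwa [Metric.mem_closedBall, dist_eq_norm] at this
    have this2 : ‖r • A i‖ ≤ ‖(xr + r • A i) - xR‖ + ‖xR - xr‖ := by
      have e : r • A i = ((xr + r • A i) - xR) + (xR - xr) := by abel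
      have h3 := norm_add_le ((xr + r • A i) - xR) (xR - xr)
      rw [← e] at h3; exact h3
    rw [norm_smul, hA i, mul_one, Real.norm_eq_abs, abs_of_pos hr] at this2
    have h2 : ‖xR - xr‖ = ‖xr - xR‖ := norm_sub_rev _ _
    linarith
  -- max of t
  obtain ⟨i₀, -, hi₀⟩ := Finset.exists_max_image Finset.univ t ⟨i, Finset.mem_univ i⟩
  have hTmax : ∀ j, t j ≤ t i₀ := fun j => hi₀ j (Finset.mem_univ j)
  set T := t i₀ with hT
  have hwi : w i ≤ Real.exp (T / τ) := by
    apply Real.exp_le_exp.mpr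
    gcongr
    exact hTmax i
  refine le_trans hwi ?_
  by_cases hT0 : T ≤ 0
  · -- small case
    have h1 : Real.exp (T / τ) ≤ 1 := by
      rw [Real.exp_le_one_iff]
      exact div_nonpos_of_nonpos_of_nonneg hT0 hτ.le
    have h2Rr : (1:ℝ) ≤ 2 * R / r := (one_le_div hr).mpr (by linarith)
    have h3 : (1:ℝ) ≤ η + ‖c‖ := by linarith [norm_nonneg c]
    have h4 : (1:ℝ) ≤ 1 + ‖y‖ := by linarith [norm_nonneg y]
    have h5 : (1:ℝ) ≤ 2 * R / r * (η + ‖c‖) := by nlinarith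
    have h6 : (1:ℝ) ≤ 2 * R / r * (η + ‖c‖) * (1 + ‖y‖) := by nlinarith
    linarith
  · push_neg at hT0
    set St : ℝ := T + r with hStdef
    have hSt : (0:ℝ) < St := by positivity
    set lam : ℝ := r / St with hlamdef
    have hlam0 : (0:ℝ) ≤ lam := by positivity
    set z : E d := xr + lam • (x - xr) with hzdef
    have hzP : ∀ j, ⟪A j, z⟫ ≤ b j := by
      intro j
      have hip : ⟪A j, z⟫ = ⟪A j, xr⟫ + lam * ⟪A j, x - xr⟫ := by
        rw [hzdef, inner_add_right, real_inner_smul_right]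
      have hxxr : ⟪A j, x - xr⟫ = t j + (b j - ⟪A j, xr⟫) := by
        rw [inner_sub_right, ht]; ring
      have h1 : ⟪A j, x - xr⟫ ≤ T + (b j - ⟪A j, xr⟫) := by
        rw [hxxr]; linarith [hTmax j]
      have h2 : lam * ⟪A j, x - xr⟫ ≤ b j - ⟪A j, xr⟫ := by
        calc lam * ⟪A j, x - xr⟫ ≤ lam * (T + (b j - ⟪A j, xr⟫)) :=
              mul_le_mul_of_nonneg_left h1 hlam0
          _ ≤ b j - ⟪A j, xr⟫ := by
              rw [hlamdef, div_mul_eq_mul_div, div_le_iff₀ hSt]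
              nlinarith [hd j]
      linarith [hip, h2]
    have hzR : ‖z - xR‖ ≤ R := by
      have := hPR hzP
      rwa [Metric.mem_closedBall, dist_eq_norm] at this
    have hco : 1 - lam = T / St := by
      rw [hlamdef]; field_simp; rw [hStdef]; ring
    have hxz : x - z = (T / St) • (x - xr) := by
      rw [← hco, hzdef, sub_smul, one_smul]
      abel
    have hTSt0 : (0:ℝ) ≤ T / St := by positivity
    have hnxz : ‖x - z‖ = (T / St) * ‖x - xr‖ := by
      rw [hxz, norm_smul, Real.norm_eq_abs, abs_of_nonneg hTSt0]
    have htri : ‖x - xr‖ ≤ ‖x - z‖ + (R + R) := by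
      have e : x - xr = ((x - z) + (z - xR)) + (xR - xr) := by abel
      have h5 := norm_add_le ((x - z) + (z - xR)) (xR - xr)
      have h6 := norm_add_le (x - z) (z - xR)
      rw [← e] at h5
      have h7 : ‖xR - xr‖ = ‖xr - xR‖ := norm_sub_rev _ _
      linarith
    have hrel : ‖x - z‖ * St = T * ‖x - xr‖ := by
      rw [hnxz]; field_simp
    have hxzbound : ‖x - z‖ ≤ 2 * R * T / r := by
      rw [le_div_iff₀ hr]
      have h8 : T * ‖x - xr‖ ≤ T * (‖x - z‖ + (R + R)) :=
        mul_le_mul_of_nonneg_left htri hT0.le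
      have h9 : ‖x - z‖ * St = ‖x - z‖ * T + ‖x - z‖ * r := by rw [hStdef]; ring
      ring_nf at h8 h9 hrel ⊢
      linarith
    -- gradient lower bound
    set sg : Fin n → ℝ := fun j => if t j ≤ 0 then w j else 0 with hsg
    have hper : ∀ j, (if j = i₀ then Real.exp (T / τ) * T else 0) + sg j * ⟪A j, x - z⟫ ≤
        w j * ⟪A j, x - z⟫ := by
      intro j
      have hipj : ⟪A j, x - z⟫ = t j + (b j - ⟪A j, z⟫) := by
        rw [inner_sub_right, ht]; ring
      by_cases hj : j = i₀
      · subst hj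
        rw [if_pos rfl, hsg]
        simp only [not_le.mpr (show 0 < t j from hT0), if_false]
        rw [zero_mul, add_zero]
        have hge : T ≤ ⟪A j, x - z⟫ := by
          rw [hipj]; have := hzP j; linarith [hTmax j]
        have hwj : w j = Real.exp (T / τ) := rfl
        rw [hwj]
        exact mul_le_mul_of_nonneg_left hge (Real.exp_nonneg _)
      · rw [if_neg hj]
        by_cases htj : t j ≤ 0
        · rw [hsg]; simp only [htj, if_true]; rw [zero_add]
        · rw [hsg]; simp only [htj, if_false]; rw [zero_mul, zero_add]
          push_neg at htj
          have hge : 0 ≤ ⟪A j, x - z⟫ := by rw [hipj]; linarith [hzP j]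
          positivity
    have e1 : ∑ j, (if j = i₀ then Real.exp (T / τ) * T else 0) = Real.exp (T / τ) * T := by
      simp
    have e2 : ⟪∑ j, sg j • A j, x - z⟫ = ∑ j, sg j * ⟪A j, x - z⟫ := by
      rw [sum_inner]
      exact Finset.sum_congr rfl (fun j _ => real_inner_smul_left _ _ _)
    have e3 : ⟪g, x - z⟫ = ∑ j, w j * ⟪A j, x - z⟫ := by
      rw [hg, sum_inner]
      exact Finset.sum_congr rfl (fun j _ => real_inner_smul_left _ _ _)
    have hsum1 : Real.exp (T / τ) * T + ⟪∑ j, sg j • A j, x - z⟫ ≤ ⟪g, x - z⟫ := by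
      have h10 := Finset.sum_le_sum (fun j (_ : j ∈ Finset.univ) => hper j)
      rw [Finset.sum_add_distrib, e1] at h10
      rw [e2, e3]
      exact h10
    have hsgbound : ‖∑ j, sg j • A j‖ ≤ η := by
      rw [hη]
      refine le_csSup hSbdd ⟨sg, fun j => ?_, rfl⟩
      rw [hsg]
      by_cases htj : t j ≤ 0
      · simp only [htj, if_true]
        rw [abs_of_pos (Real.exp_pos _)]
        rw [Real.exp_le_one_iff]
        exact div_nonpos_of_nonpos_of_nonneg htj hτ.le
      · simp only [htj, if_false]; norm_num
    have hinner_lb : -(η * ‖x - z‖) ≤ ⟪∑ j, sg j • A j, x - z⟫ := by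
      have h11 := abs_real_inner_le_norm (∑ j, sg j • A j) (x - z)
      have h12 : ‖∑ j, sg j • A j‖ * ‖x - z‖ ≤ η * ‖x - z‖ :=
        mul_le_mul_of_nonneg_right hsgbound (norm_nonneg _)
      have h13 := neg_abs_le (⟪∑ j, sg j • A j, x - z⟫)
      linarith
    have hgle : ⟪g, x - z⟫ ≤ ‖g‖ * ‖x - z‖ := real_inner_le_norm _ _
    have hgnorm : ‖g‖ ≤ ‖y‖ + ‖c‖ := by
      have e : g = y - c := by rw [hy]; abel
      rw [e]; exact norm_sub_le y c
    have hkey : Real.exp (T / τ) * T ≤ (‖y‖ + ‖c‖ + η) * (2 * R * T / r) := by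
      have hc1 : Real.exp (T / τ) * T ≤ (‖g‖ + η) * ‖x - z‖ := by
        have hexp : (‖g‖ + η) * ‖x - z‖ = ‖g‖ * ‖x - z‖ + η * ‖x - z‖ := by ring
        linarith
      have hc2 : (‖g‖ + η) * ‖x - z‖ ≤ (‖y‖ + ‖c‖ + η) * (2 * R * T / r) := by
        apply mul_le_mul (by linarith) hxzbound (norm_nonneg _)
        linarith [hη1, norm_nonneg y, norm_nonneg c]
      linarith
    have hfin : Real.exp (T / τ) ≤ (‖y‖ + ‖c‖ + η) * (2 * R / r) := by
      have he : (‖y‖ + ‖c‖ + η) * (2 * R * T / r) = ((‖y‖ + ‖c‖ + η) * (2 * R / r)) * T := by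
        ring
      rw [he] at hkey
      exact le_of_mul_le_mul_right hkey hT0
    have h2Rr0 : (0:ℝ) ≤ 2 * R / r := by positivity
    have hmono : (‖y‖ + ‖c‖ + η) ≤ (η + ‖c‖) * (1 + ‖y‖) := by
      nlinarith [hη1, norm_nonneg y, norm_nonneg c]
    calc Real.exp (T / τ) ≤ (‖y‖ + ‖c‖ + η) * (2 * R / r) := hfin
      _ ≤ (η + ‖c‖) * (1 + ‖y‖) * (2 * R / r) := mul_le_mul_of_nonneg_right hmono h2Rr0
      _ = 2 * R / r * (η + ‖c‖) * (1 + ‖y‖) := by ring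

/-- dual relative smoothness for exponential penalty functions: for
`f_τ(x) = ⟪c, x⟫ + τ ∑ᵢ exp((⟪Aᵢ, x⟫ - bᵢ)/τ)` with unit-norm rows `Aᵢ` spanning `ℝ^d`,
polytope `P = {x : Ax ≤ b}` contained in a ball of radius `R` and containing a ball of
radius `r > 0`, and `k(x*) = ‖x*‖ - log(‖x*‖+1)` with Hessian `k''` (the derivative of the
gradient map `y ↦ y/(‖y‖+1)`) and inverse Hessian `kinv`, the Hessian quadratic form of
`f_τ` satisfies `∇²f_τ(x) ⪯ L*_τ · [∇²k(∇f_τ(x))]⁻¹`, where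
`L*_τ = (2R/r)(‖AᵀA‖/τ)(η + ‖c‖)` with `η = sup_{‖s‖_∞ ≤ 1} ‖Aᵀ s‖` and `‖AᵀA‖` the
operator norm of `x ↦ ∑ᵢ ⟪Aᵢ, x⟫ Aᵢ`. -/
theorem stmt19 {n d : ℕ} (τ : ℝ) (hτ : 0 < τ)
    (A : Fin n → E d) (hA : ∀ i, ‖A i‖ = 1)
    (hrank : Submodule.span ℝ (Set.range A) = ⊤)
    (b : Fin n → ℝ) (c : E d)
    (R r : ℝ) (hr : 0 < r)
    (xR xr : E d)
    (hPR : {x : E d | ∀ i, ⟪A i, x⟫ ≤ b i} ⊆ Metric.closedBall xR R)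
    (hPr : Metric.closedBall xr r ⊆ {x : E d | ∀ i, ⟪A i, x⟫ ≤ b i})
    (η nAA : ℝ)
    (hη : η = sSup {v : ℝ | ∃ s : Fin n → ℝ, (∀ i, |s i| ≤ 1) ∧ v = ‖∑ i, s i • A i‖})
    (hnAA : nAA = sSup {v : ℝ | ∃ x : E d, ‖x‖ = 1 ∧ v = ‖∑ i, ⟪A i, x⟫ • A i‖})
    (k'' kinv : E d → (E d →L[ℝ] E d))
    (hk'' : ∀ y : E d, HasFDerivAt (fun w : E d => (‖w‖ + 1)⁻¹ • w) (k'' y) y)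
    (hkinv : ∀ y : E d,
      (k'' y).comp (kinv y) = ContinuousLinearMap.id ℝ (E d) ∧
      (kinv y).comp (k'' y) = ContinuousLinearMap.id ℝ (E d)) :
    ∀ x v : E d,
      (1 / τ) * ∑ i, Real.exp ((⟪A i, x⟫ - b i) / τ) * ⟪A i, v⟫ ^ 2 ≤
        ((2 * R / r) * (nAA / τ) * (η + ‖c‖)) *
          ⟪v, kinv (c + ∑ i, Real.exp ((⟪A i, x⟫ - b i) / τ) • A i) v⟫ := by
  intro x v
  have hwb := wbound τ hτ A hA b c R r hr xR xr hPR hPr η hη x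
  have hkv := claim3 k'' kinv hk'' hkinv (c + ∑ i, Real.exp ((⟪A i, x⟫ - b i) / τ) • A i) v
  have hη0 : (0:ℝ) ≤ η := by
    rw [hη]
    apply Real.sSup_nonneg
    rintro u ⟨s, hs, rfl⟩
    exact norm_nonneg _
  have hnAA0 : (0:ℝ) ≤ nAA := by
    rw [hnAA]
    apply Real.sSup_nonneg
    rintro u ⟨s, hs, rfl⟩
    exact norm_nonneg _
  have hxrR : ‖xr - xR‖ ≤ R := by
    have := hPR (hPr (Metric.mem_closedBall_self hr.le))
    rwa [Metric.mem_closedBall, dist_eq_norm] at this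
  have hR0 : (0:ℝ) ≤ R := le_trans (norm_nonneg _) hxrR
  have hq : ∑ i, ⟪A i, v⟫ ^ 2 ≤ nAA * ‖v‖ ^ 2 := by
    by_cases hv : v = 0
    · simp [hv]
    · have hvn : ‖v‖ ≠ 0 := norm_ne_zero_iff.mpr hv
      set vh : E d := ‖v‖⁻¹ • v with hvhdef
      have hvh : ‖vh‖ = 1 := by
        rw [hvhdef, norm_smul, Real.norm_eq_abs, abs_of_nonneg (by positivity)]
        field_simp
      have hbdd : BddAbove {u : ℝ | ∃ x : E d, ‖x‖ = 1 ∧ u = ‖∑ i, ⟪A i, x⟫ • A i‖} := by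
        refine ⟨n, ?_⟩
        rintro u ⟨xx, hxx, rfl⟩
        calc ‖∑ i, ⟪A i, xx⟫ • A i‖ ≤ ∑ i, ‖⟪A i, xx⟫ • A i‖ := norm_sum_le _ _
          _ ≤ ∑ _i : Fin n, (1:ℝ) := by
              refine Finset.sum_le_sum fun i _ => ?_
              rw [norm_smul, hA i, mul_one, Real.norm_eq_abs]
              calc |⟪A i, xx⟫| ≤ ‖A i‖ * ‖xx‖ := abs_real_inner_le_norm _ _
                _ = 1 := by rw [hA i, hxx, mul_one]
          _ = n := by simp
      have helt : ‖∑ i, ⟪A i, vh⟫ • A i‖ ≤ nAA := by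
        rw [hnAA]
        exact le_csSup hbdd ⟨vh, hvh, rfl⟩
      have eS : ⟪∑ i, ⟪A i, v⟫ • A i, v⟫ = ∑ i, ⟪A i, v⟫ ^ 2 := by
        rw [sum_inner]
        refine Finset.sum_congr rfl fun i _ => ?_
        rw [real_inner_smul_left]; ring
      have hSv : ∑ i, ⟪A i, v⟫ • A i = ‖v‖ • ∑ i, ⟪A i, vh⟫ • A i := by
        rw [Finset.smul_sum]
        refine Finset.sum_congr rfl fun i _ => ?_
        rw [smul_smul, hvhdef, real_inner_smul_right]
        congr 1
        field_simp
      calc ∑ i, ⟪A i, v⟫ ^ 2 = ⟪∑ i, ⟪A i, v⟫ • A i, v⟫ := eS.symm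
        _ ≤ ‖∑ i, ⟪A i, v⟫ • A i‖ * ‖v‖ := real_inner_le_norm _ _
        _ = (‖v‖ * ‖∑ i, ⟪A i, vh⟫ • A i‖) * ‖v‖ := by
            rw [hSv, norm_smul, Real.norm_eq_abs, abs_of_nonneg (norm_nonneg v)]
        _ ≤ (‖v‖ * nAA) * ‖v‖ := by
            exact mul_le_mul_of_nonneg_right
              (mul_le_mul_of_nonneg_left helt (norm_nonneg v)) (norm_nonneg v)
        _ = nAA * ‖v‖ ^ 2 := by ring
  set y : E d := c + ∑ i, Real.exp ((⟪A i, x⟫ - b i) / τ) • A i with hy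
  set K : ℝ := 2 * R / r * (η + ‖c‖) * (1 + ‖y‖) with hK
  have hK0 : (0:ℝ) ≤ K := by
    rw [hK]
    have h1 : (0:ℝ) ≤ 2 * R / r := by positivity
    have h2 : (0:ℝ) ≤ η + ‖c‖ := add_nonneg hη0 (norm_nonneg c)
    have h3 : (0:ℝ) ≤ 1 + ‖y‖ := by linarith [norm_nonneg y]
    exact mul_nonneg (mul_nonneg h1 h2) h3
  have hstep1 : ∑ i, Real.exp ((⟪A i, x⟫ - b i) / τ) * ⟪A i, v⟫ ^ 2 ≤ K * (nAA * ‖v‖ ^ 2) :=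
    calc ∑ i, Real.exp ((⟪A i, x⟫ - b i) / τ) * ⟪A i, v⟫ ^ 2 ≤ ∑ i, K * ⟪A i, v⟫ ^ 2 :=
          Finset.sum_le_sum fun i _ => mul_le_mul_of_nonneg_right (hwb i) (sq_nonneg _)
      _ = K * ∑ i, ⟪A i, v⟫ ^ 2 := by rw [Finset.mul_sum]
      _ ≤ K * (nAA * ‖v‖ ^ 2) := mul_le_mul_of_nonneg_left hq hK0
  have hL0 : (0:ℝ) ≤ 2 * R / r * (nAA / τ) * (η + ‖c‖) :=
    mul_nonneg (mul_nonneg (by positivity) (by positivity))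
      (add_nonneg hη0 (norm_nonneg c))
  calc (1 / τ) * ∑ i, Real.exp ((⟪A i, x⟫ - b i) / τ) * ⟪A i, v⟫ ^ 2
      ≤ (1 / τ) * (K * (nAA * ‖v‖ ^ 2)) :=
        mul_le_mul_of_nonneg_left hstep1 (by positivity)
    _ = (2 * R / r * (nAA / τ) * (η + ‖c‖)) * ((1 + ‖y‖) * ‖v‖ ^ 2) := by
        rw [hK]; ring
    _ ≤ (2 * R / r * (nAA / τ) * (η + ‖c‖)) * ⟪v, kinv y v⟫ :=
        mul_le_mul_of_nonneg_left hkv hL0
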